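/- Let L be a field of characteristic 2, let φ be an anisotropic quadratic form over L, and let s, t be independent variables over L. Then the quadratic form φ ⊥ s·φ ⊥ t·φ ⊥ st·φ (i.e., the Pfister multiple ⟨⟨s,t⟩⟩ ⊗ φ) is anisotropic over the rational function field L(s,t). -/

import Mathlib

/-!
Statement 7: Let `L` be a field of characteristic `2`, let `φ` be an anisotropic quadratic form
over `L`, and let `s, t` be independent variables over `L`.  Then the quadratic form
`φ ⊥ s·φ ⊥ t·φ ⊥ st·φ` (the Pfister multiple `⟨⟨s,t⟩⟩ ⊗ φ`) is anisotropic over the rational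
function field `L(s,t)`.

We represent the (finite-dimensional) quadratic form `φ` by a Gram matrix `M` (over a field
every finite-dimensional quadratic form is of the shape `v ↦ vᵀ M v` for some matrix `M`), so
that its base change to `L(s,t)` is given by the entrywise image of `M`, a scalar multiple
`c·φ` is given by `c • M`, and an orthogonal sum is given by a block diagonal matrix.
-/

noncomputable section
namespace PfisterAux

open Polynomial Finset

variable {ι : Type*} [Fintype ι] [DecidableEq ι]

lemma tq_apply {R : Type*} [CommRing R] (N : Matrix ι ι R) (v : ι → R) :
    N.toQuadraticMap' v = ∑ i, ∑ j, v i * v j * N i j := by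
  rw [Matrix.toQuadraticMap', Matrix.toQuadraticForm', LinearMap.BilinMap.toQuadraticMap_apply,
    Matrix.toLinearMap₂'_apply]
  simp [smul_eq_mul, mul_assoc]

variable {K : Type*} [Field K]

/-- The quadratic value over the polynomial ring. -/
def qP (N : Matrix ι ι K) (f : ι → K[X]) : K[X] :=
  ∑ i, ∑ j, f i * f j * Polynomial.C (N i j)

lemma coeff_mul_le {d : ℕ} {p q : K[X]} (hp : p.natDegree ≤ d) (hq : q.natDegree ≤ d) :
    (p * q).coeff (d + d) = p.coeff d * q.coeff d := by
  rw [Polynomial.coeff_mul, Finset.sum_eq_single (d, d)]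
  · rintro ⟨a, b⟩ hab hne
    rw [Finset.HasAntidiagonal.mem_antidiagonal] at hab
    have hne' : ¬(a = d ∧ b = d) := by simpa [Prod.ext_iff] using hne
    rcases lt_or_ge d a with h | h
    · rw [Polynomial.coeff_eq_zero_of_natDegree_lt (lt_of_le_of_lt hp h), zero_mul]
    · have hb : d < b := by omega
      rw [Polynomial.coeff_eq_zero_of_natDegree_lt (lt_of_le_of_lt hq hb), mul_zero]
  · intro h
    simp at h

lemma qP_ne_zero (N : Matrix ι ι K) (hN : N.toQuadraticMap'.Anisotropic)
    {f : ι → K[X]} (hf : f ≠ 0) :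
    qP N f ≠ 0 ∧ Even ((qP N f).natDegree) := by
  obtain ⟨i₀, hi₀⟩ := Function.ne_iff.mp hf
  set d := Finset.univ.sup (fun i => (f i).natDegree) with hd
  have hle : ∀ i, (f i).natDegree ≤ d := fun i => hd ▸ Finset.le_sup (f := fun i => (f i).natDegree) (Finset.mem_univ i)
  have hc : ∃ k, (f k).coeff d ≠ 0 := by
    obtain ⟨i₁, -, hi₁⟩ := Finset.exists_mem_eq_sup Finset.univ ⟨i₀, Finset.mem_univ _⟩
      (fun i => (f i).natDegree)
    by_cases h1 : f i₁ = 0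
    · have hd0 : d = 0 := by rw [hd, hi₁, h1, Polynomial.natDegree_zero]
      refine ⟨i₀, ?_⟩
      have h0 : (f i₀).natDegree = 0 := le_antisymm (hd0 ▸ hle i₀) (Nat.zero_le _)
      rw [hd0]
      intro hz
      exact hi₀ (by rw [Polynomial.eq_C_of_natDegree_eq_zero h0, hz, map_zero]; rfl)
    · refine ⟨i₁, ?_⟩
      have hde : d = (f i₁).natDegree := by rw [hd, hi₁]
      rw [hde]
      exact Polynomial.leadingCoeff_ne_zero.mpr h1
  set c : ι → K := fun i => (f i).coeff d with hcdef
  have hcne : c ≠ 0 := by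
    obtain ⟨k, hk⟩ := hc
    exact fun h => hk (by simpa [hcdef] using congrFun h k)
  have hcoeff : (qP N f).coeff (d + d) = N.toQuadraticMap' c := by
    rw [tq_apply]
    simp only [qP]
    rw [Polynomial.finset_sum_coeff]
    refine Finset.sum_congr rfl fun i _ => ?_
    rw [Polynomial.finset_sum_coeff]
    refine Finset.sum_congr rfl fun j _ => ?_
    rw [Polynomial.coeff_mul_C, coeff_mul_le (hle i) (hle j)]
  have hqne : N.toQuadraticMap' c ≠ 0 := fun h => hcne (hN c h)
  have hne : qP N f ≠ 0 := fun h => hqne (by rw [← hcoeff, h, Polynomial.coeff_zero])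
  refine ⟨hne, ?_⟩
  have hub : (qP N f).natDegree ≤ d + d := by
    refine Polynomial.natDegree_sum_le_of_forall_le _ _ fun i _ => ?_
    refine Polynomial.natDegree_sum_le_of_forall_le _ _ fun j _ => ?_
    calc (f i * f j * Polynomial.C (N i j)).natDegree
        ≤ (f i * f j).natDegree + (Polynomial.C (N i j)).natDegree :=
          Polynomial.natDegree_mul_le
      _ ≤ (f i * f j).natDegree := by rw [Polynomial.natDegree_C]; omega
      _ ≤ (f i).natDegree + (f j).natDegree := Polynomial.natDegree_mul_le
      _ ≤ d + d := Nat.add_le_add (hle i) (hle j)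
  have hlb : d + d ≤ (qP N f).natDegree :=
    Polynomial.le_natDegree_of_ne_zero (hcoeff ▸ hqne)
  have hdeg : (qP N f).natDegree = d + d := le_antisymm hub hlb
  rw [hdeg]
  exact ⟨d, rfl⟩

lemma key_poly (N : Matrix ι ι K) (hN : N.toQuadraticMap'.Anisotropic)
    {f g : ι → K[X]} (h : qP N f + Polynomial.X * qP N g = 0) : f = 0 ∧ g = 0 := by
  have hz : qP N (0 : ι → K[X]) = 0 := by simp [qP]
  by_cases hf : f = 0
  · subst hf
    rw [hz, zero_add] at h
    rcases mul_eq_zero.mp h with h' | h'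
    · exact absurd h' Polynomial.X_ne_zero
    · by_cases hg : g = 0
      · exact ⟨rfl, hg⟩
      · exact absurd h' (qP_ne_zero N hN hg).1
  · by_cases hg : g = 0
    · subst hg
      rw [hz, mul_zero, add_zero] at h
      exact absurd h (qP_ne_zero N hN hf).1
    · exfalso
      obtain ⟨hf1, a, ha⟩ := qP_ne_zero N hN hf
      obtain ⟨hg1, b, hb⟩ := qP_ne_zero N hN hg
      have heq : qP N f = -(Polynomial.X * qP N g) := eq_neg_of_add_eq_zero_left h
      have hdeq : (qP N f).natDegree = (Polynomial.X * qP N g).natDegree := by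
        rw [heq, Polynomial.natDegree_neg]
      rw [Polynomial.natDegree_mul Polynomial.X_ne_zero hg1, Polynomial.natDegree_X] at hdeq
      omega

lemma tq_fromBlocks {R : Type*} [CommRing R] (A B : Matrix ι ι R) (w : ι ⊕ ι → R) :
    (Matrix.fromBlocks A 0 0 B).toQuadraticMap' w
      = A.toQuadraticMap' (w ∘ Sum.inl) + B.toQuadraticMap' (w ∘ Sum.inr) := by
  simp [tq_apply, Fintype.sum_sum_type, Finset.sum_add_distrib]

lemma tq_smul {R : Type*} [CommRing R] (a : R) (A : Matrix ι ι R) (v : ι → R) :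
    (a • A).toQuadraticMap' v = a * A.toQuadraticMap' v := by
  simp only [tq_apply, Matrix.smul_apply, smul_eq_mul, Finset.mul_sum]
  exact Finset.sum_congr rfl fun i _ => Finset.sum_congr rfl fun j _ => by ring

lemma tq_map {R S : Type*} [CommRing R] [CommRing S] (φ : R →+* S)
    (A : Matrix ι ι R) (v : ι → R) :
    (A.map φ).toQuadraticMap' (φ ∘ v) = φ (A.toQuadraticMap' v) := by
  simp [tq_apply, map_sum, map_mul, Matrix.map_apply]

lemma step (K : Type*) [Field K] (N : Matrix ι ι K) (hN : N.toQuadraticMap'.Anisotropic) :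
    (Matrix.fromBlocks
      (N.map ((algebraMap K[X] (FractionRing K[X])).comp Polynomial.C)) 0 0
      (algebraMap K[X] (FractionRing K[X]) Polynomial.X •
        N.map ((algebraMap K[X] (FractionRing K[X])).comp
          Polynomial.C))).toQuadraticMap'.Anisotropic := by
  intro w hw
  set α := algebraMap K[X] (FractionRing K[X]) with hα
  have hinj : Function.Injective α := IsFractionRing.injective K[X] (FractionRing K[X])
  obtain ⟨b, hb⟩ := IsLocalization.exist_integer_multiples_of_finite (nonZeroDivisors K[X]) w
  have hb' : ∀ i, ∃ q : K[X], α q = (b : K[X]) • w i := fun i => hb i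
  choose p hp using hb'
  have hβ : ∀ i, α (p i) = α (b : K[X]) * w i := fun i => by
    rw [hp i, Algebra.smul_def]
  have key : ∀ (u : ι → FractionRing K[X]) (q : ι → K[X]), (∀ i, α (q i) = α (b : K[X]) * u i) →
      α (qP N q) = α (b : K[X]) * α (b : K[X]) *
        (N.map (α.comp Polynomial.C)).toQuadraticMap' u := by
    intro u q hq
    simp only [qP, tq_apply, map_sum, Finset.mul_sum]
    refine Finset.sum_congr rfl fun i _ => Finset.sum_congr rfl fun j _ => ?_
    rw [map_mul, map_mul, hq i, hq j]
    simp only [Matrix.map_apply, RingHom.comp_apply]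
    ring
  rw [tq_fromBlocks, tq_smul] at hw
  have h0 : α (qP N (p ∘ Sum.inl) + Polynomial.X * qP N (p ∘ Sum.inr)) = 0 := by
    have hcalc : α (qP N (p ∘ Sum.inl) + Polynomial.X * qP N (p ∘ Sum.inr))
        = α (b : K[X]) * α (b : K[X]) *
          ((N.map (α.comp Polynomial.C)).toQuadraticMap' (w ∘ Sum.inl) +
            α Polynomial.X *
              (N.map (α.comp Polynomial.C)).toQuadraticMap' (w ∘ Sum.inr)) := by
      rw [map_add, map_mul, key (w ∘ Sum.inl) (p ∘ Sum.inl) (fun i => hβ (Sum.inl i)),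
        key (w ∘ Sum.inr) (p ∘ Sum.inr) (fun i => hβ (Sum.inr i))]
      ring
    rw [hcalc, hw, mul_zero]
  have hz : qP N (p ∘ Sum.inl) + Polynomial.X * qP N (p ∘ Sum.inr) = 0 :=
    hinj (by rw [h0, map_zero])
  obtain ⟨hf, hg⟩ := key_poly N hN hz
  have hbne : α (b : K[X]) ≠ 0 := fun h =>
    nonZeroDivisors.coe_ne_zero b (hinj (by rw [h, map_zero]))
  funext i
  have hwi : α (b : K[X]) * w i = 0 := by
    rw [← hβ i]
    cases i with
    | inl i => rw [show p (Sum.inl i) = (p ∘ Sum.inl) i from rfl, hf]; simp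
    | inr i => rw [show p (Sum.inr i) = (p ∘ Sum.inr) i from rfl, hg]; simp
  have := mul_eq_zero.mp hwi
  simpa [hbne] using this

section Assembly

variable (L : Type*) [Field L]

abbrev FF1 := FractionRing (Polynomial L)

abbrev FF2 := FractionRing (Polynomial (FF1 L))

def e1 : L →+* FF1 L := (algebraMap (Polynomial L) (FF1 L)).comp Polynomial.C

def e2 : FF1 L →+* FF2 L := (algebraMap (Polynomial (FF1 L)) (FF2 L)).comp Polynomial.C

def x1 : FF1 L := algebraMap (Polynomial L) (FF1 L) Polynomial.X

def y2 : FF2 L := algebraMap (Polynomial (FF1 L)) (FF2 L) Polynomial.X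

def psiIn : MvPolynomial (Fin 1) L ≃+* Polynomial L :=
  ((MvPolynomial.renameEquiv L (Equiv.equivPUnit.{1, 1} (Fin 1))).trans
    (MvPolynomial.pUnitAlgEquiv L)).toRingEquiv

def gHom : MvPolynomial (Fin 2) L →+* FF2 L :=
  ((algebraMap (Polynomial (FF1 L)) (FF2 L)).comp
    ((Polynomial.mapRingHom (algebraMap (Polynomial L) (FF1 L))).comp
      ((Polynomial.mapRingHom (psiIn L).toRingHom).comp
        (((MvPolynomial.finSuccEquiv L 1).toRingEquiv.toRingHom).comp
          (MvPolynomial.renameEquiv L (Equiv.swap (0 : Fin 2) 1)).toRingEquiv.toRingHom))))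

lemma gHom_injective : Function.Injective (gHom L) := by
  simp only [gHom, RingHom.coe_comp]
  exact (IsFractionRing.injective (Polynomial (FF1 L)) (FF2 L)).comp
    ((Polynomial.map_injective _ (IsFractionRing.injective (Polynomial L) (FF1 L))).comp
      ((Polynomial.map_injective _ (psiIn L).injective).comp
        (((MvPolynomial.finSuccEquiv L 1).toRingEquiv.injective).comp
          (MvPolynomial.renameEquiv L (Equiv.swap (0 : Fin 2) 1)).toRingEquiv.injective)))

lemma psiIn_X : psiIn L (MvPolynomial.X 0) = Polynomial.X := by
  simp [psiIn]

lemma psiIn_C (a : L) : psiIn L (MvPolynomial.C a) = Polynomial.C a := by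
  simp [psiIn]

lemma gHom_X0 : gHom L (MvPolynomial.X 0) = e2 L (x1 L) := by
  have h1 : (MvPolynomial.renameEquiv L (Equiv.swap (0 : Fin 2) 1)) (MvPolynomial.X 0)
      = MvPolynomial.X 1 := by
    simp [MvPolynomial.renameEquiv_apply, MvPolynomial.rename_X]
  have h2 : (MvPolynomial.finSuccEquiv L 1) (MvPolynomial.X 1)
      = Polynomial.C (MvPolynomial.X 0) := by
    rw [show (1 : Fin 2) = Fin.succ 0 from rfl, MvPolynomial.finSuccEquiv_X_succ]
  simp only [gHom, RingHom.comp_apply, RingEquiv.toRingHom_eq_coe, RingHom.coe_coe,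
    AlgEquiv.toRingEquiv_eq_coe, AlgEquiv.coe_ringEquiv]
  rw [h1, h2]
  simp only [Polynomial.coe_mapRingHom, Polynomial.map_C]
  rw [show ((psiIn L : MvPolynomial (Fin 1) L →+* Polynomial L) (MvPolynomial.X 0))
    = Polynomial.X from psiIn_X L]
  rfl

lemma gHom_X1 : gHom L (MvPolynomial.X 1) = y2 L := by
  have h1 : (MvPolynomial.renameEquiv L (Equiv.swap (0 : Fin 2) 1)) (MvPolynomial.X 1)
      = MvPolynomial.X 0 := by
    simp [MvPolynomial.renameEquiv_apply, MvPolynomial.rename_X]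
  simp only [gHom, RingHom.comp_apply, RingEquiv.toRingHom_eq_coe, RingHom.coe_coe,
    AlgEquiv.toRingEquiv_eq_coe, AlgEquiv.coe_ringEquiv]
  rw [h1, MvPolynomial.finSuccEquiv_X_zero]
  simp only [Polynomial.coe_mapRingHom, Polynomial.map_X]
  rfl

lemma gHom_C (a : L) : gHom L (MvPolynomial.C a) = e2 L (e1 L a) := by
  have h1 : (MvPolynomial.renameEquiv L (Equiv.swap (0 : Fin 2) 1)) (MvPolynomial.C a)
      = MvPolynomial.C a := by
    simp [MvPolynomial.renameEquiv_apply]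
  have h2 : (MvPolynomial.finSuccEquiv L 1) (MvPolynomial.C a)
      = Polynomial.C (MvPolynomial.C a) := by
    simp [MvPolynomial.finSuccEquiv_apply]
  simp only [gHom, RingHom.comp_apply, RingEquiv.toRingHom_eq_coe, RingHom.coe_coe,
    AlgEquiv.toRingEquiv_eq_coe, AlgEquiv.coe_ringEquiv]
  rw [h1, h2]
  simp only [Polynomial.coe_mapRingHom, Polynomial.map_C]
  rw [show ((psiIn L : MvPolynomial (Fin 1) L →+* Polynomial L) (MvPolynomial.C a))
    = Polynomial.C a from psiIn_C L a]
  rfl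

end Assembly

lemma map_smul' {ι : Type*} {R S : Type*} [CommRing R] [CommRing S] (φ : R →+* S) (a : R)
    (A : Matrix ι ι R) : (a • A).map φ = φ a • A.map φ := by
  ext i j
  simp [Matrix.map_apply, Matrix.smul_apply]

end PfisterAux

open PfisterAux

/-- If `φ = vᵀMv` is an anisotropic quadratic form over a field `L` of
characteristic `2` and `s, t` are independent variables, then
`φ ⊥ s·φ ⊥ t·φ ⊥ st·φ = ⟨⟨s,t⟩⟩ ⊗ φ` is anisotropic over `L(s,t)`. -/
theorem pfister_multiple_anisotropic (L : Type*) [Field L] [CharP L 2]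
    (ι : Type*) [Fintype ι] [DecidableEq ι] (M : Matrix ι ι L)
    (hM : M.toQuadraticMap'.Anisotropic)
    (L2 : Type*) [Field L2] [Algebra (MvPolynomial (Fin 2) L) L2]
    [IsFractionRing (MvPolynomial (Fin 2) L) L2] [Algebra L L2]
    [IsScalarTower L (MvPolynomial (Fin 2) L) L2]
    (s t : L2) (hs : s = algebraMap (MvPolynomial (Fin 2) L) L2 (MvPolynomial.X 0))
    (ht : t = algebraMap (MvPolynomial (Fin 2) L) L2 (MvPolynomial.X 1)) :
    (Matrix.fromBlocks
        (Matrix.fromBlocks (M.map (algebraMap L L2)) 0 0 (s • M.map (algebraMap L L2))) 0 0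
        (Matrix.fromBlocks (t • M.map (algebraMap L L2)) 0 0
          ((s * t) • M.map (algebraMap L L2)))).toQuadraticMap'.Anisotropic := by
  classical
  set χ : L2 →+* FF2 L := IsFractionRing.lift (gHom_injective L) with hχ
  have hχs : χ s = e2 L (x1 L) := by
    rw [hs, hχ, IsFractionRing.lift_algebraMap, gHom_X0]
  have hχt : χ t = y2 L := by
    rw [ht, hχ, IsFractionRing.lift_algebraMap, gHom_X1]
  have hχa : ∀ a : L, χ (algebraMap L L2 a) = e2 L (e1 L a) := by
    intro a
    rw [IsScalarTower.algebraMap_apply L (MvPolynomial (Fin 2) L) L2,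
      MvPolynomial.algebraMap_eq, hχ, IsFractionRing.lift_algebraMap, gHom_C]
  have h1 := step L M hM
  set N1 : Matrix (ι ⊕ ι) (ι ⊕ ι) (FF1 L) :=
    Matrix.fromBlocks (M.map (e1 L)) 0 0 (x1 L • M.map (e1 L)) with hN1
  have h2 : (Matrix.fromBlocks (N1.map (e2 L)) 0 0
      (y2 L • N1.map (e2 L))).toQuadraticMap'.Anisotropic := step (FF1 L) N1 h1
  intro v hv
  have hmap : (Matrix.fromBlocks
        (Matrix.fromBlocks (M.map (algebraMap L L2)) 0 0 (s • M.map (algebraMap L L2))) 0 0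
        (Matrix.fromBlocks (t • M.map (algebraMap L L2)) 0 0
          ((s * t) • M.map (algebraMap L L2)))).map ⇑χ
      = Matrix.fromBlocks (N1.map (e2 L)) 0 0 (y2 L • N1.map (e2 L)) := by
    ext i j
    rcases i with (i | i) | (i | i) <;> rcases j with (j | j) | (j | j) <;>
      simp [hN1, Matrix.map_apply, Matrix.smul_apply, smul_eq_mul, map_mul, hχs, hχt, hχa,
        mul_comm, mul_left_comm, mul_assoc]
  have hQ : (Matrix.fromBlocks (N1.map (e2 L)) 0 0
      (y2 L • N1.map (e2 L))).toQuadraticMap' (⇑χ ∘ v) = 0 := by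
    rw [← hmap, tq_map, hv, map_zero]
  have hv0 := h2 (⇑χ ∘ v) hQ
  funext i
  have hvi := congrFun hv0 i
  simp only [Function.comp_apply, Pi.zero_apply] at hvi
  show v i = 0
  exact χ.injective (hvi.trans (map_zero χ).symm)

end
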